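/- arXiv:1003.5605 — 2 statements merged into one kernel-verified Lean document; each statement's English description precedes it below -/
import Mathlib

section
/- Let S(λ,α;k) be a fat staircase with bad foundation, where α = (α_1,…,α_n), λ is a partition, k ≥ 0, and λ_1 − k ≤ n. If T is a semistandard Young tableau of shape S(λ,α;k) with lattice reading word, then every entry in the first row of the foundation λ lies in the set R_{α,k} = {1 + Σ_{i=1}^{j} α_{n+1−i} : j = 1,…,n} ∪ ({1} if k > 0, else ∅); moreover the value 1 appears at most k times in that row and every other value of R_{α,k} appears at most once. -/
open Finset

namespace SchurStair

/-- A diagram is a finite set of cells `(row, column)`, with row `0` at the top. -/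
abbrev Diagram := Finset (ℕ × ℕ)

/-- `T` is a semistandard filling of `D`: positive entries, rows weakly increase
left to right, columns strictly increase top to bottom. -/
def IsSSYT (D : Diagram) (T : ℕ × ℕ → ℕ) : Prop :=
  (∀ x ∈ D, 1 ≤ T x) ∧
  (∀ i j : ℕ, (i, j) ∈ D → (i, j + 1) ∈ D → T (i, j) ≤ T (i, j + 1)) ∧
  (∀ i j : ℕ, (i, j) ∈ D → (i + 1, j) ∈ D → T (i, j) < T (i + 1, j))

/-- The content of a filling: `content D T v` is the number of cells of `D`
with entry `v`. -/
def content (D : Diagram) (T : ℕ × ℕ → ℕ) : ℕ → ℕ :=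
  fun v => (D.filter fun x => T x = v).card

/-- `y` is read at or before `x` in the reading word
(rows right to left, proceeding from the top row to the bottom). -/
def ReadBefore (x y : ℕ × ℕ) : Prop :=
  y.1 < x.1 ∨ (y.1 = x.1 ∧ x.2 ≤ y.2)

open Classical in
/-- The reading word of `T` on `D` is lattice: in every prefix, the number of
`v+1`'s read is at least the number of `v+2`'s read. -/
def IsLattice (D : Diagram) (T : ℕ × ℕ → ℕ) : Prop :=
  ∀ x ∈ D, ∀ v : ℕ,
    (D.filter fun y => ReadBefore x y ∧ T y = v + 2).card ≤
      (D.filter fun y => ReadBefore x y ∧ T y = v + 1).card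

/-- The semistandard Young tableaux of shape `D` and content `c`
(normalized to be `0` off `D`). -/
def SSYTs (D : Diagram) (c : ℕ → ℕ) : Set ((ℕ × ℕ) → ℕ) :=
  {T | IsSSYT D T ∧ (∀ x ∉ D, T x = 0) ∧ content D T = c}

/-- The SSYT of shape `D` and content `c` whose reading word is lattice. -/
def LatticeSSYTs (D : Diagram) (c : ℕ → ℕ) : Set ((ℕ × ℕ) → ℕ) :=
  {T | T ∈ SSYTs D c ∧ IsLattice D T}

/-- The coefficient of the monomial `x^c` in the skew Schur function `s_D`. -/
noncomputable def ssytCount (D : Diagram) (c : ℕ → ℕ) : ℕ := (SSYTs D c).ncard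

/-- By the Littlewood–Richardson rule, the coefficient of the Schur function
`s_c` in the Schur expansion of `s_D`. -/
noncomputable def lrCount (D : Diagram) (c : ℕ → ℕ) : ℕ := (LatticeSSYTs D c).ncard

/-- `s_{D₁} - s_{D₂}` is Schur-positive (phrased via the LR rule). -/
def SchurPos (D₁ D₂ : Diagram) : Prop := ∀ c : ℕ → ℕ, lrCount D₂ c ≤ lrCount D₁ c

/-- `α` encodes a composition `(α_1, …, α_n)`: the 1-based part `α_i` is `α (i-1)`. -/
def IsComposition (n : ℕ) (α : ℕ → ℕ) : Prop := ∀ i < n, 0 < α i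

/-- Height of column `c` (0-based) of the staircase `δ_α`. -/
def stairColHt (n : ℕ) (α : ℕ → ℕ) (c : ℕ) : ℕ := ∑ i ∈ Finset.Ico c n, α i

/-- The number of rows `|α|` of the fat staircases `δ_α`, `Δ_α`. -/
def stairLen (n : ℕ) (α : ℕ → ℕ) : ℕ := ∑ i ∈ Finset.range n, α i

/-- Row lengths of the staircase partition `δ_α = (n^{α_n}, …, 1^{α_1})`. -/
def deltaPart (n : ℕ) (α : ℕ → ℕ) : ℕ → ℕ :=
  fun r => ((Finset.range n).filter fun c => r < stairColHt n α c).card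

/-- The rotated fat staircase `Δ_α`, inside its `|α| × n` bounding box. -/
def deltaUp (n : ℕ) (α : ℕ → ℕ) : Diagram :=
  (Finset.range (stairLen n α) ×ˢ Finset.range n).filter fun x =>
    stairLen n α ≤ x.1 + stairColHt n α (n - 1 - x.2)

/-- Cells of a partition `lam` (with at most `m` parts), top-left justified. -/
def partCells (m : ℕ) (lam : ℕ → ℕ) : Diagram :=
  (Finset.range m ×ˢ Finset.range (lam 0)).filter fun x => x.2 < lam x.1

/-- Translate a diagram down by `dr` and right by `dc`. -/
def shiftD (D : Diagram) (dr dc : ℕ) : Diagram := D.image fun x => (x.1 + dr, x.2 + dc)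

/-- The fat staircase with bad foundation `S(λ, α; k)`: the foundation `lam`
(at most `m` parts) is placed immediately below `Δ_α`, its first row beginning
one box below and `k` boxes left of the bottom-left box of `Δ_α`, so that
the rows overlap in `lam 0 - k` column positions. -/
def shapeS (n : ℕ) (α : ℕ → ℕ) (m : ℕ) (lam : ℕ → ℕ) (k : ℕ) : Diagram :=
  shiftD (deltaUp n α) 0 k ∪ shiftD (partCells m lam) (stairLen n α) 0

/-- The direct sum `λ ⊕ Δ_α` (disconnected, `λ` to the lower left). -/
def dsumS (n : ℕ) (α : ℕ → ℕ) (m : ℕ) (lam : ℕ → ℕ) : Diagram :=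
  shiftD (deltaUp n α) 0 (lam 0) ∪ shiftD (partCells m lam) (stairLen n α) 0

/-- The hook `(a, 1^{l-1})` as a partition. -/
def hookPart (a l : ℕ) : ℕ → ℕ :=
  fun i => if i = 0 then a else if i < l then 1 else 0

/-- The set `R_{α,k}` of possible first-row foundation entries:
`{1 + α_n + ⋯ + α_{n+1-j} : 1 ≤ j ≤ n}`, together with `1` when `k > 0`. -/
def Rfin (n : ℕ) (α : ℕ → ℕ) (k : ℕ) : Finset ℕ :=
  ((Finset.Icc 1 n).image fun j => 1 + ∑ i ∈ Finset.Ico (n - j) n, α i) ∪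
    (if 0 < k then {1} else ∅)

/-- The complement `p^c` of a partition `p` in the rectangle `(b^a)`
(`a` rows of width `b`): the 180° rotation of `(b^a) / p`. -/
def complementPart (a b : ℕ) (p : ℕ → ℕ) : ℕ → ℕ :=
  fun i => if i < a then b - p (a - 1 - i) else 0

/-- Cells of the skew diagram `p / q`, where `p` has at most `a` parts. -/
def skewCells (a : ℕ) (p q : ℕ → ℕ) : Diagram :=
  (Finset.range a ×ˢ Finset.range (p 0)).filter fun x => q x.1 ≤ x.2 ∧ x.2 < p x.1

/-- Extend a tuple `Fin a → Fin (b+1)` to a function `ℕ → ℕ` (zero beyond `a`);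
used to enumerate the partitions contained in the rectangle `(b^a)`. -/
def extFun (a b : ℕ) (f : Fin a → Fin (b + 1)) : ℕ → ℕ :=
  fun i => if h : i < a then (f ⟨i, h⟩ : ℕ) else 0

/-- The content function of a partition `p`: the entry `v ≥ 1` occurs `p (v-1)` times. -/
def partContent (p : ℕ → ℕ) : ℕ → ℕ := fun v => if v = 0 then 0 else p (v - 1)

open Classical in
/-- The Littlewood–Richardson coefficient `c^ν_{κσ}` (with `ν` a partition of at
most `a` parts): the number of lattice SSYT of shape `ν/κ` and content `σ`. -/
noncomputable def lrCoeff (a : ℕ) (ν κ : ℕ → ℕ) (σ : ℕ → ℕ) : ℕ :=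
  if ∀ i, κ i ≤ ν i then lrCount (skewCells a ν κ) σ else 0

open Classical in
/-- The truncated complement, in the rectangle `(b^a)`, of the symmetric function
with Schur coefficient family `F`: `c(∑_ν F(ν) s_ν) = ∑_{ν ⊆ (b^a)} F(ν) s_{ν^c}`,
expressed as a monomial-coefficient (content-counting) function. -/
noncomputable def truncComplement (a b : ℕ) (F : (ℕ → ℕ) → ℕ) : (ℕ → ℕ) → ℕ :=
  fun c => ∑ ν : Fin a → Fin (b + 1),
    if Antitone (extFun a b ν) then
      F (extFun a b ν) *
        ssytCount (skewCells a (complementPart a b (extFun a b ν)) fun _ => 0) c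
    else 0

/-- `D` is a skew diagram: row `i` occupies the columns `g i ≤ j < f i` for
nested partitions `g ⊆ f`. -/
def IsSkew (D : Diagram) : Prop :=
  ∃ f g : ℕ → ℕ, Antitone f ∧ Antitone g ∧ (∀ i, g i ≤ f i) ∧
    ∀ x : ℕ × ℕ, x ∈ D ↔ g x.1 ≤ x.2 ∧ x.2 < f x.1

/-- One more than the largest row index of `D`. -/
def diagHeight (D : Diagram) : ℕ := D.sup fun x => x.1 + 1

/-- One more than the largest column index of `D`. -/
def diagWidth (D : Diagram) : ℕ := D.sup fun x => x.2 + 1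

/-- The direct sum `D₁ ⊕ D₂`: `D₂` placed above and to the right of `D₁`. -/
def directSum (D₁ D₂ : Diagram) : Diagram :=
  shiftD D₁ (diagHeight D₂) 0 ∪ shiftD D₂ 0 (diagWidth D₁)

/-- The 180° rotation `D°` of a diagram (within its bounding box). -/
def rotateD (D : Diagram) : Diagram :=
  D.image fun x => (diagHeight D - 1 - x.1, diagWidth D - 1 - x.2)

end SchurStair

namespace SchurStair

/-! ### Auxiliary development -/

/-- Height of the `c`-th column (from the left, 0-based) of `Δ_α`. -/
def colH (n : ℕ) (α : ℕ → ℕ) (c : ℕ) : ℕ := stairColHt n α (n - 1 - c)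

lemma colH_le (n : ℕ) (α : ℕ → ℕ) (c : ℕ) : colH n α c ≤ stairLen n α := by
  unfold colH stairColHt stairLen
  rw [← Nat.Ico_zero_eq_range]
  exact Finset.sum_le_sum_of_subset (Finset.Ico_subset_Ico (Nat.zero_le _) le_rfl)

lemma colH_mono (n : ℕ) (α : ℕ → ℕ) {c c' : ℕ} (h : c ≤ c') :
    colH n α c ≤ colH n α c' := by
  unfold colH stairColHt
  exact Finset.sum_le_sum_of_subset (Finset.Ico_subset_Ico (by omega) le_rfl)

lemma colH_strict (n : ℕ) (α : ℕ → ℕ) (hα : IsComposition n α) {c c' : ℕ}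
    (h : c < c') (h' : c' < n) : colH n α c < colH n α c' := by
  unfold colH stairColHt
  have h1 : n - 1 - c' < n - 1 - c := by omega
  have h2 : n - 1 - c ≤ n := by omega
  rw [← Finset.sum_Ico_consecutive α (le_of_lt h1) h2]
  have hpos : 0 < α (n - 1 - c') := hα _ (by omega)
  have : α (n - 1 - c') ≤ ∑ i ∈ Finset.Ico (n - 1 - c') (n - 1 - c), α i :=
    Finset.single_le_sum (fun i _ => Nat.zero_le _)
      (Finset.mem_Ico.2 ⟨le_rfl, h1⟩)
  omega

lemma colH_pos (n : ℕ) (α : ℕ → ℕ) (hα : IsComposition n α) {c : ℕ} (h : c < n) :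
    0 < colH n α c := by
  unfold colH stairColHt
  have hpos : 0 < α (n - 1 - c) := hα _ (by omega)
  have : α (n - 1 - c) ≤ ∑ i ∈ Finset.Ico (n - 1 - c) n, α i :=
    Finset.single_le_sum (fun i _ => Nat.zero_le _)
      (Finset.mem_Ico.2 ⟨le_rfl, by omega⟩)
  omega

lemma colH_lt_imp (n : ℕ) (α : ℕ → ℕ) {c c' : ℕ}
    (h : colH n α c < colH n α c') : c < c' := by
  by_contra hcon
  exact absurd (colH_mono n α (by omega : c' ≤ c)) (by omega)

lemma colH_inj (n : ℕ) (α : ℕ → ℕ) (hα : IsComposition n α) {c c' : ℕ}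
    (hc : c < n) (hc' : c' < n) (h : colH n α c = colH n α c') : c = c' := by
  rcases lt_trichotomy c c' with h1 | h1 | h1
  · exact absurd (colH_strict n α hα h1 hc') (by omega)
  · exact h1
  · exact absurd (colH_strict n α hα h1 hc) (by omega)

lemma stairLen_pos (n : ℕ) (α : ℕ → ℕ) (hα : IsComposition n α) (hn : 0 < n) :
    0 < stairLen n α := by
  unfold stairLen
  have hpos : 0 < α 0 := hα 0 hn
  have : α 0 ≤ ∑ i ∈ Finset.range n, α i :=
    Finset.single_le_sum (fun i _ => Nat.zero_le _) (Finset.mem_range.2 hn)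
  omega

/-- Membership in the shape `S(λ, α; k)`. -/
lemma mem_shape (n : ℕ) (α : ℕ → ℕ) (m : ℕ) (lam : ℕ → ℕ) (hanti : Antitone lam)
    (k : ℕ) (x : ℕ × ℕ) :
    x ∈ shapeS n α m lam k ↔
      (x.1 < stairLen n α ∧ k ≤ x.2 ∧ x.2 - k < n ∧
        stairLen n α ≤ x.1 + colH n α (x.2 - k)) ∨
      (stairLen n α ≤ x.1 ∧ x.1 - stairLen n α < m ∧ x.2 < lam (x.1 - stairLen n α)) := by
  unfold shapeS shiftD deltaUp partCells
  simp only [Finset.mem_union, Finset.mem_image, Finset.mem_filter, Finset.mem_product,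
    Finset.mem_range]
  constructor
  · rintro (⟨⟨r, c⟩, ⟨⟨hr, hc⟩, hL⟩, rfl⟩ | ⟨⟨i, j⟩, ⟨⟨hi, hj0⟩, hji⟩, rfl⟩)
    · left
      simp only [Nat.add_zero]
      refine ⟨hr, by omega, by simpa using hc, ?_⟩
      simpa [colH, Nat.add_sub_cancel] using hL
    · right
      simp only [Nat.add_zero]
      exact ⟨by omega, by omega, by simpa using hji⟩
  · rintro (⟨h1, h2, h3, h4⟩ | ⟨h1, h2, h3⟩)
    · left
      refine ⟨(x.1, x.2 - k), ⟨⟨h1, h3⟩, ?_⟩, by ext <;> simp <;> omega⟩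
      simpa [colH] using h4
    · right
      refine ⟨(x.1 - stairLen n α, x.2), ⟨⟨h2, ?_⟩, h3⟩, by ext <;> simp <;> omega⟩
      exact lt_of_lt_of_le h3 (hanti (Nat.zero_le _))

/-- Weak increase along a contiguous row segment. -/
lemma row_mono (D : Diagram) (T : ℕ × ℕ → ℕ) (hT : IsSSYT D T) (i : ℕ) :
    ∀ j j', j ≤ j' → (∀ jj, j ≤ jj → jj ≤ j' → (i, jj) ∈ D) →
      T (i, j) ≤ T (i, j') := by
  intro j j' hjj
  induction j' , hjj using Nat.le_induction with
  | base => intro _; exact le_rfl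
  | succ j' hj' IH =>
    intro hall
    exact le_trans (IH fun jj h1 h2 => hall jj h1 (by omega))
      (hT.2.1 i j' (hall j' hj' (by omega)) (hall (j' + 1) (by omega) le_rfl))

section Forced

variable (n : ℕ) (α : ℕ → ℕ) (m : ℕ) (lam : ℕ → ℕ) (k : ℕ)

/-- Lower bound for entries in the staircase part. -/
lemma col_lb (hanti : Antitone lam) (T : ℕ × ℕ → ℕ)
    (hT : IsSSYT (shapeS n α m lam k) T) :
    ∀ r c, c < n → r < stairLen n α → stairLen n α ≤ r + colH n α c →
      r + colH n α c + 1 - stairLen n α ≤ T (r, c + k) := by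
  set L := stairLen n α with hLdef
  intro r
  induction r with
  | zero =>
    intro c hc _ hL
    have h1 : colH n α c ≤ L := colH_le n α c
    have hmem : ((0 : ℕ), c + k) ∈ shapeS n α m lam k := by
      rw [mem_shape n α m lam hanti]
      left
      simp only
      refine ⟨by omega, by omega, by simpa using hc, by simpa using hL⟩
    have := hT.1 _ hmem
    omega
  | succ r IH =>
    intro c hc hr hL
    by_cases h : L ≤ r + colH n α c
    · have hmem1 : ((r : ℕ), c + k) ∈ shapeS n α m lam k := by
        rw [mem_shape n α m lam hanti]
        left
        exact ⟨by omega, by omega, by simpa using hc, by simpa using h⟩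
      have hmem2 : ((r + 1 : ℕ), c + k) ∈ shapeS n α m lam k := by
        rw [mem_shape n α m lam hanti]
        left
        exact ⟨by omega, by omega, by simpa using hc, by simpa using hL⟩
      have hlt := hT.2.2 r (c + k) hmem1 hmem2
      have := IH c hc (by omega) h
      omega
    · have hmem2 : ((r + 1 : ℕ), c + k) ∈ shapeS n α m lam k := by
        rw [mem_shape n α m lam hanti]
        left
        exact ⟨by omega, by omega, by simpa using hc, by simpa using hL⟩
      have := hT.1 _ hmem2
      omega

end Forced

/-- The staircase part of a lattice SSYT on `S(λ,α;k)` is canonically filled. -/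
lemma forced (n : ℕ) (α : ℕ → ℕ) (m : ℕ) (lam : ℕ → ℕ) (k : ℕ)
    (hα : IsComposition n α) (hanti : Antitone lam) (T : ℕ × ℕ → ℕ)
    (hT : IsSSYT (shapeS n α m lam k) T)
    (hlat : IsLattice (shapeS n α m lam k) T) :
    ∀ r, r < stairLen n α → ∀ c, c < n → stairLen n α ≤ r + colH n α c →
      T (r, c + k) = r + colH n α c + 1 - stairLen n α := by
  classical
  intro r
  induction r using Nat.strong_induction_on with
  | _ r IH1 =>
  intro hrL
  suffices H : ∀ d c, n - c ≤ d → c < n → stairLen n α ≤ r + colH n α c →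
      T (r, c + k) = r + colH n α c + 1 - stairLen n α by
    intro c hc hL; exact H n c (by omega) hc hL
  intro d
  induction d with
  | zero => intro c h hc _; omega
  | succ d IH2' =>
  intro c _hd hc hL
  have IH2 : ∀ c', c < c' → c' < n →
      T (r, c' + k) = r + colH n α c' + 1 - stairLen n α := by
    intro c' h1 h2
    have hm := colH_mono n α (le_of_lt h1)
    exact IH2' c' (by omega) h2 (by omega)
  have hcol_le := colH_le n α c
  have hxD : ((r : ℕ), c + k) ∈ shapeS n α m lam k := by
    rw [mem_shape n α m lam hanti]; left
    exact ⟨hrL, by omega, by simpa using hc, by simpa using hL⟩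
  have hlb : r + colH n α c + 1 - stairLen n α ≤ T (r, c + k) :=
    col_lb n α m lam k hanti T hT r c hc hrL hL
  by_contra hne
  have hlt : r + colH n α c + 1 - stairLen n α < T (r, c + k) := by omega
  set v := T (r, c + k) with hv
  have hv2 : 2 ≤ v := by omega
  -- characterize the cells read before `(r, c+k)` carrying the value `v - 1`
  have hchar : ∀ y ∈ (shapeS n α m lam k).filter
      fun y => ReadBefore (r, c + k) y ∧ T y = v - 1,
      y.1 < r ∧ k ≤ y.2 ∧ y.2 - k < n ∧
        y.1 + colH n α (y.2 - k) + 2 = stairLen n α + v := by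
    intro y hy
    rw [Finset.mem_filter] at hy
    obtain ⟨hyD, hrb, hTy⟩ := hy
    rw [mem_shape n α m lam hanti] at hyD
    rcases hrb with hlt1 | ⟨heq, hle⟩
    · rcases hyD with ⟨h1, h2, h3, h4⟩ | ⟨h1, _, _⟩
      · have hcanon := IH1 y.1 hlt1 (by omega) (y.2 - k) h3 h4
        have hy2 : y.2 - k + k = y.2 := by omega
        rw [hy2, Prod.mk.eta] at hcanon
        refine ⟨hlt1, h2, h3, by omega⟩
      · omega
    · exfalso
      rcases hyD with ⟨h1, h2, h3, h4⟩ | ⟨h1, _, _⟩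
      · by_cases hcc : y.2 - k = c
        · have hyx : y = (r, c + k) := by
            rw [Prod.ext_iff]; constructor <;> simp <;> omega
          rw [hyx] at hTy
          omega
        · have hcc' : c < y.2 - k := by omega
          have hall : ∀ jj, c + k ≤ jj → jj ≤ y.2 → ((r : ℕ), jj) ∈ shapeS n α m lam k := by
            intro jj hj1 hj2
            rw [mem_shape n α m lam hanti]; left
            have hmono := colH_mono n α (show c ≤ jj - k by omega)
            have hmono2 := colH_mono n α (show jj - k ≤ y.2 - k by omega)
            dsimp only
            exact ⟨hrL, by omega, by omega, by omega⟩
          have hrm := row_mono (shapeS n α m lam k) T hT r (c + k) y.2 hle hall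
          have hyx : y = (r, y.2) := by rw [Prod.ext_iff]; exact ⟨heq, rfl⟩
          rw [hyx] at hTy
          omega
      · omega
  have hA : ((shapeS n α m lam k).filter
        fun y => ReadBefore (r, c + k) y ∧ T y = v - 1).card ≤
      ((Finset.range n).filter
        fun c' => stairLen n α - r + v - 1 ≤ colH n α c').card := by
    apply Finset.card_le_card_of_injOn (fun y => y.2 - k)
    · intro y hy
      obtain ⟨h1, h2, h3, h4⟩ := hchar y hy
      simp only [Finset.mem_coe, Finset.mem_filter, Finset.mem_range]
      exact ⟨h3, by omega⟩
    · intro y hy y' hy' heq2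
      obtain ⟨h1, h2, h3, h4⟩ := hchar y (Finset.mem_coe.1 hy)
      obtain ⟨h1', h2', h3', h4'⟩ := hchar y' (Finset.mem_coe.1 hy')
      simp only at heq2
      have hcol : y.2 = y'.2 := by omega
      rw [Prod.ext_iff]
      rw [hcol] at h4
      exact ⟨by omega, hcol⟩
  have hB : ((Finset.range n).filter
        fun c' => stairLen n α - r + v - 1 ≤ colH n α c').card + 1 ≤
      ((shapeS n α m lam k).filter
        fun y => ReadBefore (r, c + k) y ∧ T y = v).card := by
    have hcnot : c ∉ (Finset.range n).filter
        fun c' => stairLen n α - r + v - 1 ≤ colH n α c' := by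
      rw [Finset.mem_filter]
      push_neg
      intro _
      omega
    rw [← Finset.card_insert_of_notMem hcnot]
    apply Finset.card_le_card_of_injOn
      (fun c' => (if c' = c then r else stairLen n α + v - 1 - colH n α c', c' + k))
    · intro c' hc'
      simp only [Finset.mem_coe] at hc' ⊢
      rcases Finset.mem_insert.1 hc' with rfl | hc''
      · simp only [if_pos rfl]
        rw [Finset.mem_filter]
        exact ⟨hxD, Or.inr ⟨rfl, le_rfl⟩, hv.symm⟩
      · rw [Finset.mem_filter, Finset.mem_range] at hc''
        obtain ⟨hc'n, hc'h⟩ := hc''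
        have hne' : c' ≠ c := by
          rintro rfl
          exact hcnot (Finset.mem_filter.2 ⟨Finset.mem_range.2 hc'n, hc'h⟩)
        rw [if_neg hne']
        have hch_le := colH_le n α c'
        by_cases hρr : stairLen n α + v - 1 - colH n α c' < r
        · have hcanon := IH1 (stairLen n α + v - 1 - colH n α c') hρr (by omega) c' hc'n
            (by omega)
          rw [Finset.mem_filter]
          refine ⟨?_, Or.inl hρr, ?_⟩
          · rw [mem_shape n α m lam hanti]; left
            refine ⟨by omega, by omega, by simpa using hc'n, ?_⟩
            simp only [Nat.add_sub_cancel]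
            omega
          · rw [hcanon]; omega
        · have hρeq : stairLen n α + v - 1 - colH n α c' = r := by omega
          have hcc' : c < c' := colH_lt_imp n α (by omega)
          have hcanon := IH2 c' hcc' hc'n
          rw [hρeq, Finset.mem_filter]
          refine ⟨?_, Or.inr ⟨rfl, by omega⟩, ?_⟩
          · rw [mem_shape n α m lam hanti]; left
            exact ⟨hrL, by omega, by simpa using hc'n, by simp; omega⟩
          · rw [hcanon]; omega
    · intro c1 h1 c2 h2 he
      have := congrArg Prod.snd he
      simp only at this
      omega
  have hlatx := hlat (r, c + k) hxD (v - 2)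
  have e1 : v - 2 + 2 = v := by omega
  have e2 : v - 2 + 1 = v - 1 := by omega
  rw [e1, e2] at hlatx
  omega

/-- In a lattice SSYT of shape `S(λ,α;k)`, the entries of the first
row of the foundation lie in `R_{α,k}`; `1` appears at most `k` times there and
every other value at most once. -/
theorem firstRow_mem_R (n : ℕ) (α : ℕ → ℕ) (hα : IsComposition n α)
    (m : ℕ) (lam : ℕ → ℕ) (hanti : Antitone lam) (hm : ∀ i, m ≤ i → lam i = 0)
    (hpos : ∀ i < m, 0 < lam i) (k : ℕ) (hk : lam 0 ≤ n + k)
    (T : (ℕ × ℕ) → ℕ)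
    (hT : IsSSYT (shapeS n α m lam k) T)
    (hT0 : ∀ x ∉ shapeS n α m lam k, T x = 0)
    (hlat : IsLattice (shapeS n α m lam k) T) :
    (∀ j < lam 0, T (stairLen n α, j) ∈ Rfin n α k) ∧
    ((Finset.range (lam 0)).filter fun j => T (stairLen n α, j) = 1).card ≤ k ∧
    (∀ t : ℕ, t ≠ 1 →
      ((Finset.range (lam 0)).filter fun j => T (stairLen n α, j) = t).card ≤ 1) := by
  classical
  have hm0 : lam 0 ≠ 0 → 0 < m := by
    intro h
    by_contra hm'
    exact h (hm 0 (by omega))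
  have hfmem : ∀ j, j < lam 0 → ((stairLen n α : ℕ), j) ∈ shapeS n α m lam k := by
    intro j hj
    rw [mem_shape n α m lam hanti]; right
    dsimp only
    rw [Nat.sub_self]
    exact ⟨le_rfl, hm0 (by omega), hj⟩
  have htwo : ∀ j, j < lam 0 → k ≤ j → 2 ≤ T (stairLen n α, j) := by
    intro j hj hkj
    have hjn : j - k < n := by omega
    have hL1 : 0 < stairLen n α := stairLen_pos n α hα (by omega)
    have hcp := colH_pos n α hα hjn
    have hcl := colH_le n α (j - k)
    have hup : ((stairLen n α - 1 : ℕ), j) ∈ shapeS n α m lam k := by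
      rw [mem_shape n α m lam hanti]; left
      dsimp only
      exact ⟨by omega, by omega, by omega, by omega⟩
    have h1 := hT.1 _ hup
    have hstrict := hT.2.2 (stairLen n α - 1) j hup
      (by rw [show stairLen n α - 1 + 1 = stairLen n α from by omega]; exact hfmem j hj)
    rw [show stairLen n α - 1 + 1 = stairLen n α from by omega] at hstrict
    omega
  have hrowL : ∀ j j', j ≤ j' → j' < lam 0 →
      T (stairLen n α, j) ≤ T (stairLen n α, j') :=
    fun j j' hjj hj' =>
      row_mono _ T hT _ j j' hjj (fun jj h1 h2 => hfmem jj (by omega))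
  -- upper bound on the count of `w` in the prefix ending at `(L, j)`
  have hUB : ∀ j w, j < lam 0 → 1 ≤ w →
      (∀ j', j ≤ j' → j' < lam 0 → w < T (stairLen n α, j')) →
      ((shapeS n α m lam k).filter
        fun y => ReadBefore (stairLen n α, j) y ∧ T y = w).card ≤
      ((Finset.range n).filter fun c' => w ≤ colH n α c').card := by
    intro j w hj hw hbig
    have hchar : ∀ y ∈ (shapeS n α m lam k).filter
        (fun y => ReadBefore (stairLen n α, j) y ∧ T y = w),
        y.1 < stairLen n α ∧ k ≤ y.2 ∧ y.2 - k < n ∧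
          y.1 + colH n α (y.2 - k) + 1 = stairLen n α + w := by
      intro y hy
      rw [Finset.mem_filter] at hy
      obtain ⟨hyD, hrb, hTy⟩ := hy
      rw [mem_shape n α m lam hanti] at hyD
      rcases hyD with ⟨h1, h2, h3, h4⟩ | ⟨h1, h2, h3⟩
      · refine ⟨h1, h2, h3, ?_⟩
        have hcanon := forced n α m lam k hα hanti T hT hlat y.1 h1 (y.2 - k) h3 h4
        rw [show y.2 - k + k = y.2 from by omega, Prod.mk.eta] at hcanon
        omega
      · exfalso
        rcases hrb with hlt1 | ⟨heq, hle⟩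
        · exact absurd h1 (by omega)
        · have hy2 : y.2 < lam 0 := by
            rw [heq] at h3
            simpa [Nat.sub_self] using h3
          have hbig' := hbig y.2 hle hy2
          have hyx : y = (stairLen n α, y.2) := Prod.ext_iff.2 ⟨heq, rfl⟩
          rw [hyx] at hTy
          omega
    apply Finset.card_le_card_of_injOn (fun y => y.2 - k)
    · intro y hy
      obtain ⟨h1, h2, h3, h4⟩ := hchar y hy
      simp only [Finset.mem_coe, Finset.mem_filter, Finset.mem_range]
      exact ⟨h3, by omega⟩
    · intro y hy y' hy' heq2
      obtain ⟨h1, h2, h3, h4⟩ := hchar y (Finset.mem_coe.1 hy)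
      obtain ⟨h1', h2', h3', h4'⟩ := hchar y' (Finset.mem_coe.1 hy')
      simp only at heq2
      have hcol : y.2 = y'.2 := by omega
      rw [Prod.ext_iff]
      rw [hcol] at h4
      exact ⟨by omega, hcol⟩
  -- staircase cells carrying the value `t`, read before `(L, j)`
  have hLBmem : ∀ j t c', j < lam 0 → 1 ≤ t →
      c' ∈ (Finset.range n).filter (fun c' => t ≤ colH n α c') →
      ((stairLen n α + t - 1 - colH n α c' : ℕ), c' + k) ∈ (shapeS n α m lam k).filter
        fun y => ReadBefore (stairLen n α, j) y ∧ T y = t := by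
    intro j t c' hj ht hc'
    rw [Finset.mem_filter, Finset.mem_range] at hc'
    obtain ⟨hc'n, hc'h⟩ := hc'
    have hle := colH_le n α c'
    have hmem : ((stairLen n α + t - 1 - colH n α c' : ℕ), c' + k) ∈ shapeS n α m lam k := by
      rw [mem_shape n α m lam hanti]; left
      dsimp only
      rw [Nat.add_sub_cancel]
      exact ⟨by omega, by omega, by omega, by omega⟩
    refine Finset.mem_filter.2 ⟨hmem, Or.inl (by dsimp only; omega), ?_⟩
    have hcanon := forced n α m lam k hα hanti T hT hlat
      (stairLen n α + t - 1 - colH n α c') (by omega) c' hc'n (by omega)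
    rw [hcanon]
    omega
  -- lower bound on the count of `t` (one extra cell in the foundation row)
  have hLB1 : ∀ j t, j < lam 0 → T (stairLen n α, j) = t → 1 ≤ t →
      ((Finset.range n).filter fun c' => t ≤ colH n α c').card + 1 ≤
      ((shapeS n α m lam k).filter
        fun y => ReadBefore (stairLen n α, j) y ∧ T y = t).card := by
    intro j t hj hTt ht
    set S := ((Finset.range n).filter fun c' => t ≤ colH n α c').image
      (fun c' => ((stairLen n α + t - 1 - colH n α c' : ℕ), c' + k)) with hS
    have hScard : S.card = ((Finset.range n).filter fun c' => t ≤ colH n α c').card := by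
      apply Finset.card_image_of_injOn
      intro c1 h1 c2 h2 he
      have := congrArg Prod.snd he
      simp only at this
      omega
    have hnotm : (stairLen n α, j) ∉ S := by
      rw [hS]
      intro hmem
      rw [Finset.mem_image] at hmem
      obtain ⟨c', hc', he⟩ := hmem
      rw [Finset.mem_filter] at hc'
      obtain ⟨_, hc2⟩ := hc'
      have := congrArg Prod.fst he
      simp only at this
      have := colH_le n α c'
      omega
    have hsub : insert (stairLen n α, j) S ⊆ (shapeS n α m lam k).filter
        fun y => ReadBefore (stairLen n α, j) y ∧ T y = t := by
      intro y hy
      rcases Finset.mem_insert.1 hy with rfl | hy'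
      · exact Finset.mem_filter.2 ⟨hfmem j hj, Or.inr ⟨rfl, le_rfl⟩, hTt⟩
      · rw [hS, Finset.mem_image] at hy'
        obtain ⟨c', hc', rfl⟩ := hy'
        exact hLBmem j t c' hj ht hc'
    calc ((Finset.range n).filter fun c' => t ≤ colH n α c').card + 1
        = (insert (stairLen n α, j) S).card := by
          rw [Finset.card_insert_of_notMem hnotm, hScard]
      _ ≤ _ := Finset.card_le_card hsub
  -- comparing the column-height counting functions
  have hCstep : ∀ t, 2 ≤ t →
      ((Finset.range n).filter fun c' => t - 1 ≤ colH n α c').card ≤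
      ((Finset.range n).filter fun c' => t ≤ colH n α c').card + 1 := by
    intro t ht
    have hsub : (Finset.range n).filter (fun c' => t - 1 ≤ colH n α c') ⊆
        ((Finset.range n).filter fun c' => t ≤ colH n α c') ∪
        ((Finset.range n).filter fun c' => colH n α c' = t - 1) := by
      intro a ha
      obtain ⟨h1, h2⟩ := Finset.mem_filter.1 ha
      rw [Finset.mem_union, Finset.mem_filter, Finset.mem_filter]
      rcases le_or_gt t (colH n α a) with h | h
      · exact Or.inl ⟨h1, h⟩
      · exact Or.inr ⟨h1, by omega⟩
    have hone : ((Finset.range n).filter fun c' => colH n α c' = t - 1).card ≤ 1 := by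
      rw [Finset.card_le_one]
      intro a ha b hb
      obtain ⟨ha1, ha2⟩ := Finset.mem_filter.1 ha
      obtain ⟨hb1, hb2⟩ := Finset.mem_filter.1 hb
      exact colH_inj n α hα (Finset.mem_range.1 ha1) (Finset.mem_range.1 hb1)
        (by omega)
    have := Finset.card_le_card hsub
    have := Finset.card_union_le ((Finset.range n).filter fun c' => t ≤ colH n α c')
      ((Finset.range n).filter fun c' => colH n α c' = t - 1)
    omega
  have hCeq : ∀ t, 2 ≤ t → (∀ c', c' < n → colH n α c' ≠ t - 1) →
      (Finset.range n).filter (fun c' => t - 1 ≤ colH n α c') =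
        (Finset.range n).filter (fun c' => t ≤ colH n α c') := by
    intro t ht hno
    apply Finset.filter_congr
    intro a ha
    have := hno a (Finset.mem_range.1 ha)
    constructor <;> intro h <;> omega
  refine ⟨?_, ?_, ?_⟩
  · -- membership in Rfin
    intro j hj
    by_contra hnot
    have ht1 : 1 ≤ T (stairLen n α, j) := hT.1 _ (hfmem j hj)
    by_cases ht1' : T (stairLen n α, j) = 1
    · have hk0 : k = 0 := by
        by_contra hk'
        apply hnot
        unfold Rfin
        rw [Finset.mem_union]
        right
        rw [if_pos (by omega)]
        rw [ht1']
        exact Finset.mem_singleton_self 1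
      have := htwo j hj (by omega)
      omega
    · have ht2 : 2 ≤ T (stairLen n α, j) := by omega
      have hnoh : ∀ c', c' < n → colH n α c' ≠ T (stairLen n α, j) - 1 := by
        intro c' hc' hcontra
        apply hnot
        unfold Rfin
        rw [Finset.mem_union]
        left
        rw [Finset.mem_image]
        refine ⟨c' + 1, Finset.mem_Icc.2 ⟨by omega, by omega⟩, ?_⟩
        have hidx : n - (c' + 1) = n - 1 - c' := by omega
        rw [hidx]
        show 1 + stairColHt n α (n - 1 - c') = T (stairLen n α, j)
        have hc : stairColHt n α (n - 1 - c') = T (stairLen n α, j) - 1 := hcontra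
        omega
      have hub := hUB j (T (stairLen n α, j) - 1) hj (by omega)
        (fun j' h1 h2 => by have := hrowL j j' h1 h2; omega)
      have hlb := hLB1 j (T (stairLen n α, j)) hj rfl (by omega)
      have hlatx := hlat (stairLen n α, j) (hfmem j hj) (T (stairLen n α, j) - 2)
      rw [show T (stairLen n α, j) - 2 + 2 = T (stairLen n α, j) from by omega,
        show T (stairLen n α, j) - 2 + 1 = T (stairLen n α, j) - 1 from by omega] at hlatx
      have hceq := congrArg Finset.card
        (hCeq (T (stairLen n α, j)) ht2 hnoh)
      omega
  · -- at most k ones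
    have hsub : (Finset.range (lam 0)).filter (fun j => T (stairLen n α, j) = 1) ⊆
        Finset.range k := by
      intro j hj
      obtain ⟨hj1, hj2⟩ := Finset.mem_filter.1 hj
      rw [Finset.mem_range] at hj1 ⊢
      by_contra h
      have := htwo j hj1 (by omega)
      omega
    calc _ ≤ (Finset.range k).card := Finset.card_le_card hsub
      _ = k := Finset.card_range k
  · -- every other value at most once
    intro t hne
    have key : ∀ j1 j2, j1 < j2 → j2 < lam 0 → T (stairLen n α, j1) = t →
        T (stairLen n α, j2) = t → False := by
      intro j1 j2 h12 hj2 htv1 htv2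
      have hj1 : j1 < lam 0 := by omega
      have htpos : 1 ≤ t := by have := hT.1 _ (hfmem j1 hj1); omega
      have ht2' : 2 ≤ t := by omega
      have hub := hUB j1 (t - 1) hj1 (by omega)
        (fun j' h1 h2 => by have := hrowL j1 j' h1 h2; omega)
      set Scols := (Finset.range n).filter (fun c' => t ≤ colH n α c') with hScols
      set S := Scols.image
        (fun c' => ((stairLen n α + t - 1 - colH n α c' : ℕ), c' + k)) with hS
      have hrowS : ∀ y ∈ S, y.1 < stairLen n α := by
        intro y hy
        rw [hS, Finset.mem_image] at hy
        obtain ⟨c', hc', rfl⟩ := hy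
        rw [hScols, Finset.mem_filter] at hc'
        have := colH_le n α c'
        dsimp only
        omega
      have hScard : S.card = Scols.card := by
        apply Finset.card_image_of_injOn
        intro c1 h1 c2 h2 he
        have := congrArg Prod.snd he
        simp only at this
        omega
      have hn2 : (stairLen n α, j2) ∉ S := by
        intro h
        have := hrowS _ h
        simp only [Prod.fst] at this
        omega
      have hn1 : (stairLen n α, j1) ∉ insert (stairLen n α, j2) S := by
        rw [Finset.mem_insert]
        rintro (he | h)
        · have := congrArg Prod.snd he
          simp only at this
          omega
        · have := hrowS _ h
          simp only [Prod.fst] at this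
          omega
      have hsub : insert (stairLen n α, j1) (insert (stairLen n α, j2) S) ⊆
          (shapeS n α m lam k).filter
            fun y => ReadBefore (stairLen n α, j1) y ∧ T y = t := by
        intro y hy
        rcases Finset.mem_insert.1 hy with rfl | hy'
        · exact Finset.mem_filter.2 ⟨hfmem j1 hj1, Or.inr ⟨rfl, le_rfl⟩, htv1⟩
        rcases Finset.mem_insert.1 hy' with rfl | hy''
        · exact Finset.mem_filter.2
            ⟨hfmem j2 hj2, Or.inr ⟨rfl, le_of_lt h12⟩, htv2⟩
        · rw [hS, Finset.mem_image] at hy''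
          obtain ⟨c', hc', rfl⟩ := hy''
          exact hLBmem j1 t c' hj1 (by omega) hc'
      have hcards : Scols.card + 2 ≤ ((shapeS n α m lam k).filter
          fun y => ReadBefore (stairLen n α, j1) y ∧ T y = t).card := by
        have hcc := Finset.card_le_card hsub
        rw [Finset.card_insert_of_notMem hn1, Finset.card_insert_of_notMem hn2,
          hScard] at hcc
        omega
      have hlatx := hlat (stairLen n α, j1) (hfmem j1 hj1) (t - 2)
      rw [show t - 2 + 2 = t from by omega,
        show t - 2 + 1 = t - 1 from by omega] at hlatx
      have hstep := hCstep t ht2'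
      rw [hScols] at hcards
      omega
    rw [Finset.card_le_one]
    intro j1 hj1 j2 hj2
    obtain ⟨hj1r, hj1t⟩ := Finset.mem_filter.1 hj1
    obtain ⟨hj2r, hj2t⟩ := Finset.mem_filter.1 hj2
    rw [Finset.mem_range] at hj1r hj2r
    rcases lt_trichotomy j1 j2 with h | h | h
    · exact absurd (key j1 j2 h hj2r hj1t hj2t) not_false
    · exact h
    · exact absurd (key j2 j1 h hj1r hj2t hj1t) not_false

end SchurStair
end

section
/- Let α = (α_1,…,α_n) be a composition, 0 ≤ k ≤ 1, λ a partition, and w = n + k. Then, for complementation in any rectangle of width w (and appropriate height), c(s_λ · s_{Δ_α}) = c(s_{S(λ,α;k)}), where c is the truncated complement operator in that rectangle. -/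
open Finset

namespace SchurStair

open Classical

variable {n : ℕ} {α : ℕ → ℕ}

/-- Height of the `c`-th column (left to right, 0-based) of `Δ_α`. -/
def ht (n : ℕ) (α : ℕ → ℕ) (c : ℕ) : ℕ := stairColHt n α (n - 1 - c)

lemma ht_mono {c c' : ℕ} (h : c ≤ c') : ht n α c ≤ ht n α c' := by
  unfold ht stairColHt
  exact Finset.sum_le_sum_of_subset (Finset.Ico_subset_Ico (by omega) le_rfl)

lemma ht_le (c : ℕ) : ht n α c ≤ stairLen n α := by
  unfold ht stairColHt stairLen
  rw [Finset.range_eq_Ico]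
  exact Finset.sum_le_sum_of_subset (Finset.Ico_subset_Ico (Nat.zero_le _) le_rfl)

lemma ht_pos (hα : IsComposition n α) {c : ℕ} (hc : c < n) : 0 < ht n α c := by
  have hn : 0 < n := by omega
  have h1 : n - 1 ∈ Finset.Ico (n - 1 - c) n := by
    simp [Finset.mem_Ico]; omega
  have := Finset.single_le_sum (f := α) (fun i _ => Nat.zero_le _) h1
  have := hα (n-1) (by omega)
  unfold ht stairColHt
  omega

lemma ht_strict (hα : IsComposition n α) {c c' : ℕ} (h : c < c') (h' : c' < n) :
    ht n α c < ht n α c' := by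
  unfold ht stairColHt
  have hab : n - 1 - c' < n - 1 - c := by omega
  rw [← Finset.sum_Ico_consecutive (α) (le_of_lt hab) (by omega : n - 1 - c ≤ n)]
  have h1 : n - 1 - c' ∈ Finset.Ico (n - 1 - c') (n - 1 - c) := by
    simp [Finset.mem_Ico]; omega
  have := Finset.single_le_sum (f := α) (fun i _ => Nat.zero_le _) h1
  have := hα (n - 1 - c') (by omega)
  omega

lemma L_pos (hα : IsComposition n α) (hn : 0 < n) : 0 < stairLen n α := by
  have h1 : (0:ℕ) ∈ Finset.range n := by simpa using hn
  have := Finset.single_le_sum (f := α) (fun i _ => Nat.zero_le _) h1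
  have := hα 0 hn
  unfold stairLen
  omega

/-- The shape `S(λ,α;p)` with the staircase at horizontal offset `p`. -/
def shapeP (n : ℕ) (α : ℕ → ℕ) (m : ℕ) (lam : ℕ → ℕ) (p : ℕ) : Diagram :=
  shiftD (deltaUp n α) 0 p ∪ shiftD (partCells m lam) (stairLen n α) 0

lemma dsumS_eq_shapeP (m : ℕ) (lam : ℕ → ℕ) : dsumS n α m lam = shapeP n α m lam (lam 0) := rfl

lemma shapeS_eq_shapeP (m : ℕ) (lam : ℕ → ℕ) (k : ℕ) :
    shapeS n α m lam k = shapeP n α m lam k := rfl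

lemma mem_deltaUp {x : ℕ × ℕ} :
    x ∈ deltaUp n α ↔ x.1 < stairLen n α ∧ x.2 < n ∧ stairLen n α ≤ x.1 + ht n α x.2 := by
  unfold deltaUp ht
  simp only [Finset.mem_filter, Finset.mem_product, Finset.mem_range]
  tauto

lemma mem_partCells {m : ℕ} {lam : ℕ → ℕ} (hanti : Antitone lam) {x : ℕ × ℕ} :
    x ∈ partCells m lam ↔ x.1 < m ∧ x.2 < lam x.1 := by
  unfold partCells
  simp only [Finset.mem_filter, Finset.mem_product, Finset.mem_range]
  constructor
  · tauto
  · rintro ⟨h1, h2⟩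
    exact ⟨⟨h1, lt_of_lt_of_le h2 (hanti (Nat.zero_le _))⟩, h2⟩

lemma mem_shapeP {m : ℕ} {lam : ℕ → ℕ} (hanti : Antitone lam) {p : ℕ} {x : ℕ × ℕ} :
    x ∈ shapeP n α m lam p ↔
      (x.1 < stairLen n α ∧ p ≤ x.2 ∧ x.2 - p < n ∧
        stairLen n α ≤ x.1 + ht n α (x.2 - p)) ∨
      (stairLen n α ≤ x.1 ∧ x.1 - stairLen n α < m ∧ x.2 < lam (x.1 - stairLen n α)) := by
  unfold shapeP shiftD
  simp only [Finset.mem_union, Finset.mem_image, mem_deltaUp, mem_partCells hanti]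
  constructor
  · rintro (⟨y, ⟨h1, h2, h3⟩, rfl⟩ | ⟨y, ⟨h1, h2⟩, rfl⟩)
    · left
      refine ⟨by simpa using h1, by simp, ?_, ?_⟩ <;> simp <;> omega
    · right
      simp only []
      constructor
      · omega
      constructor
      · omega
      · have : y.1 + stairLen n α - stairLen n α = y.1 := by omega
        rw [this]; simpa using h2
  · rintro (⟨h1, h2, h3, h4⟩ | ⟨h1, h2, h3⟩)
    · left
      exact ⟨(x.1, x.2 - p), ⟨h1, h3, h4⟩, by ext <;> simp <;> omega⟩
    · right
      exact ⟨(x.1 - stairLen n α, x.2), ⟨h2, h3⟩, by ext <;> simp <;> omega⟩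

section Main

variable {n : ℕ} {α : ℕ → ℕ} {m : ℕ} {lam : ℕ → ℕ} {p : ℕ} {T : ℕ × ℕ → ℕ}

/-- Weak increase along a row of the staircase part. -/
lemma delta_row_mono (hanti : Antitone lam) (hT : IsSSYT (shapeP n α m lam p) T)
    {r c c' : ℕ} (h1 : c ≤ c') (h2 : c' < n) (h3 : r < stairLen n α)
    (h4 : stairLen n α ≤ r + ht n α c) : T (r, c + p) ≤ T (r, c' + p) := by
  induction c', (h1 : c ≤ c') using Nat.le_induction with
  | base => exact le_refl _
  | succ c' hcc ih =>
    have ih' := ih (by omega)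
    refine le_trans ih' ?_
    have hmem : (r, c' + p) ∈ shapeP n α m lam p := by
      rw [mem_shapeP hanti]
      left
      refine ⟨h3, by omega, by simp; omega, ?_⟩
      have : ht n α c ≤ ht n α c' := ht_mono (by omega)
      simp; omega
    have hmem2 : (r, (c' + 1) + p) ∈ shapeP n α m lam p := by
      rw [mem_shapeP hanti]
      left
      refine ⟨h3, by omega, by simp; omega, ?_⟩
      have : ht n α c ≤ ht n α (c' + 1) := ht_mono (by omega)
      simp; omega
    have h5 := hT.2.1 r (c' + p) hmem (by rw [show c' + p + 1 = c' + 1 + p by omega]; exact hmem2)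
    rw [show c' + p + 1 = c' + 1 + p by omega] at h5
    exact h5

/-- Weak increase along the first row of the foundation. -/
lemma lam_row_mono (hanti : Antitone lam) (hm : ∀ i, m ≤ i → lam i = 0)
    (hT : IsSSYT (shapeP n α m lam p) T)
    {j j' : ℕ} (h1 : j ≤ j') (h2 : j' < lam 0) : T (stairLen n α, j) ≤ T (stairLen n α, j') := by
  have hm0 : 0 < m := by
    by_contra h
    have := hm 0 (by omega)
    omega
  induction j', (h1 : j ≤ j') using Nat.le_induction with
  | base => exact le_refl _
  | succ j' hjj ih =>
    refine le_trans (ih (by omega)) ?_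
    have hmem : (stairLen n α, j') ∈ shapeP n α m lam p := by
      rw [mem_shapeP hanti]; right; simp; omega
    have hmem2 : (stairLen n α, j' + 1) ∈ shapeP n α m lam p := by
      rw [mem_shapeP hanti]; right; simp; omega
    exact hT.2.1 _ _ hmem hmem2

end Main

section Canon

variable {n : ℕ} {α : ℕ → ℕ} {m : ℕ} {lam : ℕ → ℕ} {p : ℕ} {T : ℕ × ℕ → ℕ}

/-- The staircase part of a lattice SSYT on `shapeP` is canonically filled:
each column contains `1, 2, …, h` from top to bottom. -/
lemma canonical (hα : IsComposition n α) (hanti : Antitone lam)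
    (hT : IsSSYT (shapeP n α m lam p) T) (hlat : IsLattice (shapeP n α m lam p) T) :
    ∀ r c, r < stairLen n α → c < n → stairLen n α ≤ r + ht n α c →
      T (r, c + p) = r + ht n α c + 1 - stairLen n α := by
  set L := stairLen n α with hLdef
  set D := shapeP n α m lam p with hD
  suffices H : ∀ N r c, r * n + (n - 1 - c) < N → r < L → c < n → L ≤ r + ht n α c →
      T (r, c + p) = r + ht n α c + 1 - L by
    intro r c h1 h2 h3
    exact H (r * n + (n - 1 - c) + 1) r c (by omega) h1 h2 h3
  intro N
  induction N with
  | zero => intro r c h; omega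
  | succ N IH =>
    intro r c hN h1 h2 h3
    have hnpos : 0 < n := by omega
    have hx : (r, c + p) ∈ D := by
      rw [hD, mem_shapeP hanti]; left
      refine ⟨h1, by omega, by simp; omega, by simp; omega⟩
    have hrN : r * n ≤ N := by omega
    -- lower bound
    have hlow : r + ht n α c + 1 - L ≤ T (r, c + p) := by
      by_cases hdpos : L < r + ht n α c
      · have hhtle := ht_le (n := n) (α := α) c
        have hr1 : 1 ≤ r := by omega
        have habove : (r - 1, c + p) ∈ D := by
          rw [hD, mem_shapeP hanti]; left
          refine ⟨by omega, by omega, by simp; omega, by simp; omega⟩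
        have hmul : (r - 1) * n + n = r * n := by
          rw [Nat.sub_mul, one_mul]
          have : n ≤ r * n := Nat.le_mul_of_pos_left n (by omega)
          omega
        have hih := IH (r - 1) c (by omega) (by omega) h2 (by omega)
        have hcol := hT.2.2 (r - 1) (c + p) habove
          (by rw [show r - 1 + 1 = r by omega]; exact hx)
        rw [show r - 1 + 1 = r by omega] at hcol
        omega
      · have := hT.1 _ hx; omega
    by_contra hne
    set v := T (r, c + p) with hvdef
    have hd2 : r + ht n α c - L + 2 ≤ v := by omega
    have hvge2 : 2 ≤ v := by omega
    have key := hlat (r, c + p) hx (v - 2)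
    rw [show v - 2 + 2 = v by omega, show v - 2 + 1 = v - 1 by omega] at key
    have hxmem : (r, c + p) ∈ D.filter fun y => ReadBefore (r, c + p) y ∧ T y = v := by
      refine Finset.mem_filter.mpr ⟨hx, Or.inr ⟨rfl, le_rfl⟩, rfl⟩
    have hinj : (D.filter fun y => ReadBefore (r, c + p) y ∧ T y = v - 1).card ≤
        ((D.filter fun y => ReadBefore (r, c + p) y ∧ T y = v).erase (r, c + p)).card := by
      apply Finset.card_le_card_of_injOn (fun y => (y.1 + 1, y.2))
      · rintro ⟨ry, jy⟩ hy
        rw [Finset.mem_coe, Finset.mem_filter] at hy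
        simp only [ReadBefore] at hy
        obtain ⟨hyD, hrb, hyval⟩ := hy
        rw [hD, mem_shapeP hanti] at hyD
        have hyd : ry < L ∧ p ≤ jy ∧ jy - p < n ∧ L ≤ ry + ht n α (jy - p) := by
          rcases hyD with h | h
          · exact h
          · exfalso; simp only at h; omega
        obtain ⟨hy1, hy2, hy3, hy4⟩ := hyd
        -- y is strictly above row r
        have hylt : ry < r := by
          by_contra hge
          have hry : ry = r := by omega
          have hcle : c + p ≤ jy := by omega
          have hcne : jy - p ≠ c := by
            intro h
            have hjy : jy = c + p := by omega
            rw [hry, hjy] at hyval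
            omega
          have hmono := delta_row_mono hanti hT (le_of_lt (by omega : c < jy - p)) hy3 h1 h3
          rw [show jy - p + p = jy by omega] at hmono
          rw [hry] at hyval
          omega
        -- canonical value of y via IH
        have hmuly : (ry + 1) * n ≤ r * n := Nat.mul_le_mul_right n (by omega)
        have hsucy : (ry + 1) * n = ry * n + n := by rw [Nat.succ_mul]
        have hihy := IH ry (jy - p) (by omega) hy1 hy3 hy4
        rw [show jy - p + p = jy by omega] at hihy
        have heq : ry + ht n α (jy - p) = L + v - 2 := by omega
        have hhtv : v ≤ ht n α (jy - p) := by omega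
        -- column of y is strictly right of c
        have hcgt : c < jy - p := by
          by_contra hle
          have := ht_mono (n := n) (α := α) (by omega : jy - p ≤ c)
          omega
        -- the cell below y
        have hzD : ((ry + 1 : ℕ), jy) ∈ D := by
          rw [hD, mem_shapeP hanti]; left
          refine ⟨by omega, by omega, by simp; omega, by simp; omega⟩
        have hmulz : (ry + 2) * n ≤ r * n ∨ ry + 1 = r := by
          rcases Nat.lt_or_ge (ry + 1) r with h | h
          · exact Or.inl (Nat.mul_le_mul_right n (by omega))
          · exact Or.inr (by omega)
        have hsucz : (ry + 2) * n = (ry + 1) * n + n := by rw [show ry + 2 = (ry+1)+1 by omega, Nat.succ_mul]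
        have hmeasz : (ry + 1) * n + (n - 1 - (jy - p)) < N := by
          rcases hmulz with h | h
          · omega
          · rw [h]; omega
        have hihz := IH (ry + 1) (jy - p) hmeasz (by omega) hy3 (by omega)
        rw [show jy - p + p = jy by omega] at hihz
        rw [Finset.mem_coe, Finset.mem_erase, Finset.mem_filter]
        simp only [ReadBefore]
        refine ⟨?_, hzD, ?_, by omega⟩
        · intro hcon
          rw [Prod.ext_iff] at hcon
          simp only at hcon
          omega
        · omega
      · rintro ⟨ry, jy⟩ _ ⟨ry', jy'⟩ _ heq
        simp only [Prod.mk.injEq] at heq ⊢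
        omega
    have hcerase := Finset.card_erase_of_mem hxmem
    have hpos : 0 < (D.filter fun y => ReadBefore (r, c + p) y ∧ T y = v).card :=
      Finset.card_pos.mpr ⟨_, hxmem⟩
    omega

end Canon

section RowL

variable {n : ℕ} {α : ℕ → ℕ} {m : ℕ} {lam : ℕ → ℕ} {p k : ℕ} {T : ℕ × ℕ → ℕ}

lemma m_pos (hm : ∀ i, m ≤ i → lam i = 0) {j : ℕ} (hj : j < lam 0) : 0 < m := by
  by_contra h
  have := hm 0 (by omega)
  omega

lemma rowL_mem (hanti : Antitone lam) (hm : ∀ i, m ≤ i → lam i = 0) {j : ℕ} (hj : j < lam 0) :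
    ((stairLen n α : ℕ), j) ∈ shapeP n α m lam p := by
  rw [mem_shapeP hanti]; right
  have := m_pos hm hj
  simp; omega

lemma rowL_ge_two (hα : IsComposition n α) (hanti : Antitone lam) (hm : ∀ i, m ≤ i → lam i = 0)
    (hT : IsSSYT (shapeP n α m lam p) T) (hlat : IsLattice (shapeP n α m lam p) T)
    (hcont : content (shapeP n α m lam p) T 1 ≤ n + k)
    {j : ℕ} (hjk : k ≤ j) (hj : j < lam 0) : 2 ≤ T (stairLen n α, j) := by
  have hx : ((stairLen n α : ℕ), j) ∈ (shapeP n α m lam p) := rowL_mem hanti hm hj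
  have hone : 1 ≤ T ((stairLen n α), j) := hT.1 _ hx
  by_contra hlt
  have hTj : T ((stairLen n α), j) = 1 := by omega
  set S1 := (Finset.range n).image (fun c => ((stairLen n α : ℕ) - ht n α c, c + p)) with hS1
  set S2 := (Finset.range (j + 1)).image (fun j' => ((stairLen n α : ℕ), j')) with hS2
  have hsub : S1 ∪ S2 ⊆ (shapeP n α m lam p).filter (fun y => T y = 1) := by
    intro y hy
    simp only [hS1, hS2, Finset.mem_union, Finset.mem_image, Finset.mem_range] at hy
    rcases hy with ⟨c, hc, rfl⟩ | ⟨j', hj', rfl⟩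
    · have h1 : ht n α c ≤ (stairLen n α) := ht_le c
      have h2 : 0 < ht n α c := ht_pos hα hc
      have hmem : ((stairLen n α : ℕ) - ht n α c, c + p) ∈ (shapeP n α m lam p) := by
        rw [mem_shapeP hanti]; left
        refine ⟨by omega, by omega, by simp; omega, by simp; omega⟩
      have hcan := canonical hα hanti hT hlat ((stairLen n α) - ht n α c) c (by omega) hc (by omega)
      rw [Finset.mem_filter]
      exact ⟨hmem, by rw [hcan]; omega⟩
    · have hmem : ((stairLen n α : ℕ), j') ∈ (shapeP n α m lam p) := rowL_mem hanti hm (by omega)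
      have hmono := lam_row_mono hanti hm hT (by omega : j' ≤ j) hj
      have hone' := hT.1 _ hmem
      rw [Finset.mem_filter]
      exact ⟨hmem, by omega⟩
  have hcS1 : S1.card = n := by
    rw [hS1, Finset.card_image_of_injOn, Finset.card_range]
    intro a _ b _ hab
    rw [Prod.ext_iff] at hab
    simp only at hab
    omega
  have hcS2 : S2.card = j + 1 := by
    rw [hS2, Finset.card_image_of_injOn, Finset.card_range]
    intro a _ b _ hab
    rw [Prod.ext_iff] at hab
    simp only at hab
    omega
  have hdisj : Disjoint S1 S2 := by
    rw [Finset.disjoint_left]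
    rintro y hy1 hy2
    simp only [hS1, hS2, Finset.mem_image, Finset.mem_range] at hy1 hy2
    obtain ⟨c, hc, rfl⟩ := hy1
    obtain ⟨j', hj', hab⟩ := hy2
    rw [Prod.ext_iff] at hab
    simp only at hab
    have := ht_pos hα hc
    have := L_pos hα (by omega : 0 < n)
    omega
  have hcards := Finset.card_union_of_disjoint hdisj
  have hle := Finset.card_le_card hsub
  rw [hcards, hcS1, hcS2] at hle
  have hc1 : content (shapeP n α m lam p) T 1 = ((shapeP n α m lam p).filter (fun y => T y = 1)).card := rfl
  rw [hc1] at hcont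
  omega

lemma rowL_exists (hα : IsComposition n α) (hanti : Antitone lam) (hm : ∀ i, m ≤ i → lam i = 0)
    (hT : IsSSYT (shapeP n α m lam p) T) (hlat : IsLattice (shapeP n α m lam p) T)
    (hcont : content (shapeP n α m lam p) T 1 ≤ n + k)
    {j : ℕ} (hjk : k ≤ j) (hj : j < lam 0) :
    (∃ c, c < n ∧ ht n α c + 1 = T (stairLen n α, j)) ∧
      (j + 1 < lam 0 → T (stairLen n α, j) < T (stairLen n α, j + 1)) := by
  have hx : ((stairLen n α : ℕ), j) ∈ (shapeP n α m lam p) := rowL_mem hanti hm hj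
  set v := T ((stairLen n α), j) with hv
  have hv2 : 2 ≤ v := rowL_ge_two hα hanti hm hT hlat hcont hjk hj
  have key := hlat ((stairLen n α), j) hx (v - 2)
  rw [show v - 2 + 2 = v by omega, show v - 2 + 1 = v - 1 by omega] at key
  -- analysis of cells of value v - 1 read before ((stairLen n α), j): staircase cells of column height ≥ v - 1
  have hana : ∀ y ∈ (shapeP n α m lam p).filter (fun y => ReadBefore ((stairLen n α : ℕ), j) y ∧ T y = v - 1),
      y.1 < (stairLen n α) ∧ p ≤ y.2 ∧ y.2 - p < n ∧ y.1 + ht n α (y.2 - p) = (stairLen n α) + v - 2 := by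
    rintro ⟨ry, jy⟩ hy
    rw [Finset.mem_filter] at hy
    simp only [ReadBefore] at hy
    obtain ⟨hyD, hrb, hyval⟩ := hy
    rw [mem_shapeP hanti] at hyD
    have hyΔ : ry < (stairLen n α) ∧ p ≤ jy ∧ jy - p < n ∧ (stairLen n α) ≤ ry + ht n α (jy - p) := by
      rcases hyD with h | h
      · exact h
      · exfalso
        simp only at h hrb
        have hry : ry = (stairLen n α) := by omega
        have hjle : j ≤ jy := by omega
        have hjy : jy < lam 0 := by
          have h3 := h.2.2
          rw [hry] at h3
          simpa using h3
        have hmono := lam_row_mono hanti hm hT hjle hjy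
        rw [hry] at hyval
        omega
    obtain ⟨hy1, hy2, hy3, hy4⟩ := hyΔ
    have hcan := canonical hα hanti hT hlat ry (jy - p) hy1 hy3 hy4
    rw [show jy - p + p = jy by omega] at hcan
    refine ⟨hy1, hy2, hy3, ?_⟩
    show ry + ht n α (jy - p) = stairLen n α + v - 2
    omega
  have hup : ((shapeP n α m lam p).filter (fun y => ReadBefore ((stairLen n α : ℕ), j) y ∧ T y = v - 1)).card ≤
      ((Finset.range n).filter (fun c => v - 1 ≤ ht n α c)).card := by
    apply Finset.card_le_card_of_injOn (fun y => y.2 - p)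
    · intro y hy
      obtain ⟨h1, h2, h3, h4⟩ := hana y hy
      simp only [Finset.mem_coe, Finset.mem_filter, Finset.mem_range]
      exact ⟨h3, by omega⟩
    · intro y hy y' hy' hcol
      obtain ⟨h1, h2, h3, h4⟩ := hana y hy
      obtain ⟨h1', h2', h3', h4'⟩ := hana y' hy'
      simp only at hcol
      have hr : y.1 = y'.1 := by rw [hcol] at h4; omega
      have hj2 : y.2 = y'.2 := by omega
      exact Prod.ext hr hj2
  -- lower bound for value-v prefix cells
  set S := ((Finset.range n).filter (fun c => v ≤ ht n α c)).image
      (fun c => ((stairLen n α : ℕ) - ht n α c + (v - 1), c + p)) with hSdef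
  have hScard : S.card = ((Finset.range n).filter (fun c => v ≤ ht n α c)).card := by
    rw [hSdef, Finset.card_image_of_injOn]
    intro a _ b _ hab
    rw [Prod.ext_iff] at hab
    simp only at hab
    omega
  have hSsub : S ⊆ (shapeP n α m lam p).filter (fun y => ReadBefore ((stairLen n α : ℕ), j) y ∧ T y = v) := by
    intro y hy
    simp only [hSdef, Finset.mem_image, Finset.mem_filter, Finset.mem_range] at hy
    obtain ⟨c, ⟨hc, hhc⟩, rfl⟩ := hy
    have h1 : ht n α c ≤ (stairLen n α) := ht_le c
    have hrow : ((stairLen n α) : ℕ) - ht n α c + (v - 1) < (stairLen n α) := by omega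
    have hmem : ((stairLen n α : ℕ) - ht n α c + (v - 1), c + p) ∈ (shapeP n α m lam p) := by
      rw [mem_shapeP hanti]; left
      refine ⟨hrow, by omega, by simp; omega, by simp; omega⟩
    have hcan := canonical hα hanti hT hlat ((stairLen n α) - ht n α c + (v - 1)) c hrow hc (by omega)
    rw [Finset.mem_filter]
    simp only [ReadBefore]
    exact ⟨hmem, Or.inl hrow, by rw [hcan]; omega⟩
  have hxv : ((stairLen n α : ℕ), j) ∈ (shapeP n α m lam p).filter (fun y => ReadBefore ((stairLen n α : ℕ), j) y ∧ T y = v) :=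
    Finset.mem_filter.mpr ⟨hx, Or.inr ⟨rfl, le_rfl⟩, rfl⟩
  have hxS : ((stairLen n α : ℕ), j) ∉ S := by
    intro hcon
    simp only [hSdef, Finset.mem_image, Finset.mem_filter, Finset.mem_range] at hcon
    obtain ⟨c, ⟨hc, hhc⟩, hab⟩ := hcon
    rw [Prod.ext_iff] at hab
    simp only at hab
    have h1 : ht n α c ≤ (stairLen n α) := ht_le c
    omega
  have hlow1 : ((Finset.range n).filter (fun c => v ≤ ht n α c)).card + 1 ≤
      ((shapeP n α m lam p).filter (fun y => ReadBefore ((stairLen n α : ℕ), j) y ∧ T y = v)).card := by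
    have hins : insert ((stairLen n α : ℕ), j) S ⊆ (shapeP n α m lam p).filter (fun y => ReadBefore ((stairLen n α : ℕ), j) y ∧ T y = v) := by
      intro y hy
      rcases Finset.mem_insert.mp hy with rfl | hy'
      · exact hxv
      · exact hSsub hy'
    have := Finset.card_le_card hins
    rw [Finset.card_insert_of_notMem hxS] at this
    omega
  -- splitting the count of tall columns
  have hsplit : ((Finset.range n).filter (fun c => v - 1 ≤ ht n α c)).card ≤
      ((Finset.range n).filter (fun c => v ≤ ht n α c)).card +
      ((Finset.range n).filter (fun c => ht n α c = v - 1)).card := by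
    refine le_trans (Finset.card_le_card ?_) (Finset.card_union_le _ _)
    intro c hc
    simp only [Finset.mem_union, Finset.mem_filter, Finset.mem_range] at hc ⊢
    omega
  have hone : ((Finset.range n).filter (fun c => ht n α c = v - 1)).card ≤ 1 := by
    rw [Finset.card_le_one]
    intro a ha b hb
    simp only [Finset.mem_filter, Finset.mem_range] at ha hb
    rcases Nat.lt_trichotomy a b with h | h | h
    · have := ht_strict hα h hb.1; omega
    · exact h
    · have := ht_strict hα h ha.1; omega
  have hchain := le_trans hlow1 (le_trans key (le_trans hup hsplit))
  have hne : 1 ≤ ((Finset.range n).filter (fun c => ht n α c = v - 1)).card := by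
    by_contra h0
    push_neg at h0
    rw [Nat.lt_one_iff] at h0
    rw [h0] at hchain
    omega
  constructor
  · obtain ⟨c, hc⟩ := Finset.card_pos.mp (show 0 < ((Finset.range n).filter (fun c => ht n α c = v - 1)).card from hne)
    simp only [Finset.mem_filter, Finset.mem_range] at hc
    exact ⟨c, hc.1, by omega⟩
  · intro hj1
    have hmono := lam_row_mono hanti hm hT (by omega : j ≤ j + 1) hj1
    rcases Nat.lt_or_ge (T ((stairLen n α), j)) (T ((stairLen n α), j + 1)) with h | h
    · exact h
    exfalso
    have heqv : T ((stairLen n α), j + 1) = v := by omega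
    have hx1 : ((stairLen n α : ℕ), j + 1) ∈ (shapeP n α m lam p) := rowL_mem hanti hm hj1
    have hx1v : ((stairLen n α : ℕ), j + 1) ∈ (shapeP n α m lam p).filter (fun y => ReadBefore ((stairLen n α : ℕ), j) y ∧ T y = v) :=
      Finset.mem_filter.mpr ⟨hx1, Or.inr ⟨rfl, by omega⟩, heqv⟩
    have hx1S : ((stairLen n α : ℕ), j + 1) ∉ S := by
      intro hcon
      simp only [hSdef, Finset.mem_image, Finset.mem_filter, Finset.mem_range] at hcon
      obtain ⟨c, ⟨hc, hhc⟩, hab⟩ := hcon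
      rw [Prod.ext_iff] at hab
      simp only at hab
      have h1 : ht n α c ≤ (stairLen n α) := ht_le c
      omega
    have hlow2 : ((Finset.range n).filter (fun c => v ≤ ht n α c)).card + 2 ≤
        ((shapeP n α m lam p).filter (fun y => ReadBefore ((stairLen n α : ℕ), j) y ∧ T y = v)).card := by
      have hins : insert ((stairLen n α : ℕ), j) (insert ((stairLen n α : ℕ), j + 1) S) ⊆
          (shapeP n α m lam p).filter (fun y => ReadBefore ((stairLen n α : ℕ), j) y ∧ T y = v) := by
        intro y hy
        rcases Finset.mem_insert.mp hy with rfl | hy'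
        · exact hxv
        rcases Finset.mem_insert.mp hy' with rfl | hy''
        · exact hx1v
        · exact hSsub hy''
      have hcc := Finset.card_le_card hins
      rw [Finset.card_insert_of_notMem (by
            intro hcon
            rcases Finset.mem_insert.mp hcon with h' | h'
            · rw [Prod.ext_iff] at h'; simp only at h'; omega
            · exact hxS h'),
          Finset.card_insert_of_notMem hx1S] at hcc
      omega
    omega

lemma rowL_bound (hα : IsComposition n α) (hanti : Antitone lam) (hm : ∀ i, m ≤ i → lam i = 0)
    (hT : IsSSYT (shapeP n α m lam p) T) (hlat : IsLattice (shapeP n α m lam p) T)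
    (hcont : content (shapeP n α m lam p) T 1 ≤ n + k) :
    ∀ j, k ≤ j → j < lam 0 → ht n α (j - k) + 1 ≤ T (stairLen n α, j) := by
  have hstep : ∀ t j, j = k + t → j < lam 0 →
      ∃ c, t ≤ c ∧ c < n ∧ ht n α c + 1 = T (stairLen n α, j) := by
    intro t
    induction t with
    | zero =>
      intro j hj hjl
      obtain ⟨c, hc, hceq⟩ := (rowL_exists hα hanti hm hT hlat hcont (by omega) hjl).1
      exact ⟨c, by omega, hc, hceq⟩
    | succ t ih =>
      intro j hj hjl
      obtain ⟨c0, hc0t, hc0n, hc0eq⟩ := ih (k + t) rfl (by omega)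
      have hlt : T (stairLen n α, k + t) < T (stairLen n α, k + t + 1) :=
        (rowL_exists hα hanti hm hT hlat hcont (by omega) (by omega : k + t < lam 0)).2
          (by omega)
      obtain ⟨c1, hc1n, hc1eq⟩ :=
        (rowL_exists hα hanti hm hT hlat hcont (by omega : k ≤ j) hjl).1
      have hcc : c0 < c1 := by
        by_contra hle
        have := ht_mono (n := n) (α := α) (show c1 ≤ c0 by omega)
        rw [hj, show k + (t + 1) = k + t + 1 by omega] at hc1eq
        omega
      exact ⟨c1, by omega, hc1n, hc1eq⟩
  intro j hjk hjl
  obtain ⟨c, hct, hcn, hceq⟩ := hstep (j - k) j (by omega) hjl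
  have := ht_mono (n := n) (α := α) (show j - k ≤ c from hct)
  omega

end RowL

section Transfer

variable {n : ℕ} {α : ℕ → ℕ} {m : ℕ} {lam : ℕ → ℕ} {T : ℕ × ℕ → ℕ}

/-- Move a cell of the staircase part from horizontal offset `q` to offset `p`. -/
def cellMove (L p q : ℕ) (y : ℕ × ℕ) : ℕ × ℕ :=
  if y.1 < L then (y.1, y.2 - q + p) else y

/-- Move a filling of the shape with staircase offset `p` to the one with offset `q`. -/
def moveT (L p q : ℕ) (T : ℕ × ℕ → ℕ) : ℕ × ℕ → ℕ :=
  fun x => if x.1 < L then (if q ≤ x.2 then T (x.1, x.2 - q + p) else 0) else T x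

lemma cellMove_mem (hanti : Antitone lam) {p q : ℕ} {y : ℕ × ℕ}
    (hy : y ∈ shapeP n α m lam q) :
    cellMove (stairLen n α) p q y ∈ shapeP n α m lam p := by
  rw [mem_shapeP hanti] at hy
  unfold cellMove
  rcases hy with ⟨h1, h2, h3, h4⟩ | ⟨h1, h2, h3⟩
  · rw [if_pos h1, mem_shapeP hanti]
    left
    refine ⟨h1, show p ≤ y.2 - q + p by omega, ?_, ?_⟩
    · show y.2 - q + p - p < n
      omega
    · show stairLen n α ≤ y.1 + ht n α (y.2 - q + p - p)
      rw [show y.2 - q + p - p = y.2 - q by omega]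
      omega
  · rw [if_neg (by omega), mem_shapeP hanti]
    right; exact ⟨h1, h2, h3⟩

lemma cellMove_inv (hanti : Antitone lam) {p q : ℕ} {y : ℕ × ℕ}
    (hy : y ∈ shapeP n α m lam q) :
    cellMove (stairLen n α) q p (cellMove (stairLen n α) p q y) = y := by
  rw [mem_shapeP hanti] at hy
  unfold cellMove
  rcases hy with ⟨h1, h2, h3, h4⟩ | ⟨h1, h2, h3⟩
  · rw [if_pos h1]
    simp only [if_pos h1]
    refine Prod.ext rfl ?_
    simp only
    omega
  · have hno : ¬ y.1 < stairLen n α := by omega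
    rw [if_neg hno, if_neg hno]

lemma moveT_value {L p q : ℕ} {y : ℕ × ℕ} (hq : y.1 < L → q ≤ y.2) :
    moveT L p q T y = T (cellMove L p q y) := by
  unfold moveT cellMove
  by_cases h : y.1 < L
  · rw [if_pos h, if_pos (hq h), if_pos h]
  · rw [if_neg h, if_neg h]

lemma mem_delta_offset (hanti : Antitone lam) {p q : ℕ} {x : ℕ × ℕ}
    (h1 : x.1 < stairLen n α) (h2 : q ≤ x.2)
    (h : (x.1, x.2 - q + p) ∈ shapeP n α m lam p) : x ∈ shapeP n α m lam q := by
  rw [mem_shapeP hanti] at h ⊢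
  rcases h with ⟨g1, g2, g3, g4⟩ | ⟨g1, g2, g3⟩
  · left
    have g3' : x.2 - q + p - p < n := g3
    have g4' : stairLen n α ≤ x.1 + ht n α (x.2 - q + p - p) := g4
    rw [show x.2 - q + p - p = x.2 - q by omega] at g3' g4'
    exact ⟨h1, h2, g3', g4'⟩
  · exfalso
    have g1' : stairLen n α ≤ x.1 := g1
    omega

lemma shape_mem_q (hanti : Antitone lam) {p q : ℕ} {x : ℕ × ℕ}
    (hx : stairLen n α ≤ x.1) (h : x ∈ shapeP n α m lam p) : x ∈ shapeP n α m lam q := by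
  rw [mem_shapeP hanti] at h ⊢
  rcases h with ⟨h1, _⟩ | h
  · omega
  · exact Or.inr h

lemma q_le_of_mem (hanti : Antitone lam) {q : ℕ} {x : ℕ × ℕ}
    (hx : x ∈ shapeP n α m lam q) (h1 : x.1 < stairLen n α) : q ≤ x.2 := by
  rw [mem_shapeP hanti] at hx
  rcases hx with h | h
  · exact h.2.1
  · omega

lemma cellMove_rb (hanti : Antitone lam) {p q : ℕ} {x y : ℕ × ℕ}
    (hx : x ∈ shapeP n α m lam q) (hy : y ∈ shapeP n α m lam q) :
    ReadBefore (cellMove (stairLen n α) p q x) (cellMove (stairLen n α) p q y) ↔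
      ReadBefore x y := by
  have hx2 := q_le_of_mem hanti hx
  have hy2 := q_le_of_mem hanti hy
  unfold cellMove ReadBefore
  by_cases h1 : x.1 < stairLen n α
  · have hx2' := hx2 h1
    by_cases h2 : y.1 < stairLen n α
    · have hy2' := hy2 h2
      simp only [if_pos h1, if_pos h2]
      omega
    · simp only [if_pos h1, if_neg h2]
      omega
  · by_cases h2 : y.1 < stairLen n α
    · have hy2' := hy2 h2
      simp only [if_neg h1, if_pos h2]
      omega
    · simp only [if_neg h1, if_neg h2]

lemma filter_transfer (hanti : Antitone lam) {p q v : ℕ}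
    (φ ψ : ℕ × ℕ → Prop)
    (hφψ : ∀ y ∈ shapeP n α m lam q, (φ y ↔ ψ (cellMove (stairLen n α) p q y))) :
    ((shapeP n α m lam q).filter
        (fun y => φ y ∧ moveT (stairLen n α) p q T y = v)).card =
      ((shapeP n α m lam p).filter (fun y => ψ y ∧ T y = v)).card := by
  apply Finset.card_bij' (i := fun y _ => cellMove (stairLen n α) p q y)
    (j := fun z _ => cellMove (stairLen n α) q p z)
  · intro y hy
    simp only [Finset.mem_filter] at hy ⊢
    obtain ⟨hyD, hφ, hval⟩ := hy
    refine ⟨cellMove_mem hanti hyD, (hφψ y hyD).mp hφ, ?_⟩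
    rw [moveT_value (q_le_of_mem hanti hyD)] at hval
    exact hval
  · intro z hz
    simp only [Finset.mem_filter] at hz ⊢
    obtain ⟨hzD, hψ, hval⟩ := hz
    have hzq : cellMove (stairLen n α) q p z ∈ shapeP n α m lam q := cellMove_mem hanti hzD
    have hinv : cellMove (stairLen n α) p q (cellMove (stairLen n α) q p z) = z :=
      cellMove_inv hanti hzD
    refine ⟨hzq, ?_, ?_⟩
    · rw [hφψ _ hzq, hinv]; exact hψ
    · rw [moveT_value (q_le_of_mem hanti hzq), hinv]; exact hval
  · intro y hy
    simp only [Finset.mem_filter] at hy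
    exact cellMove_inv hanti hy.1
  · intro z hz
    simp only [Finset.mem_filter] at hz
    exact cellMove_inv hanti hz.1

lemma transfer (hanti : Antitone lam) {p q : ℕ} {cc : ℕ → ℕ}
    (hT : T ∈ LatticeSSYTs (shapeP n α m lam p) cc)
    (hj : ∀ j, ((stairLen n α - 1 : ℕ), j) ∈ shapeP n α m lam q →
        ((stairLen n α : ℕ), j) ∈ shapeP n α m lam q →
        moveT (stairLen n α) p q T (stairLen n α - 1, j) <
          moveT (stairLen n α) p q T (stairLen n α, j)) :
    moveT (stairLen n α) p q T ∈ LatticeSSYTs (shapeP n α m lam q) cc := by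
  obtain ⟨⟨hssyt, hzero, hcont⟩, hlat⟩ := hT
  refine ⟨⟨?_, ?_, ?_⟩, ?_⟩
  · -- IsSSYT
    refine ⟨?_, ?_, ?_⟩
    · intro x hx
      rw [moveT_value (q_le_of_mem hanti hx)]
      exact hssyt.1 _ (cellMove_mem hanti hx)
    · intro i j h1 h2
      by_cases hi : i < stairLen n α
      · have hq1 := q_le_of_mem hanti h1 hi
        have hc1 := cellMove_mem (p := p) hanti h1
        have hc2 := cellMove_mem (p := p) hanti h2
        rw [moveT_value (q_le_of_mem hanti h1), moveT_value (q_le_of_mem hanti h2)]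
        unfold cellMove at hc1 hc2 ⊢
        simp only [if_pos hi] at hc1 hc2 ⊢
        rw [show j + 1 - q + p = (j - q + p) + 1 by omega] at hc2 ⊢
        exact hssyt.2.1 i (j - q + p) hc1 hc2
      · have hm1 : ((i : ℕ), j) ∈ shapeP n α m lam p := shape_mem_q hanti (by omega) h1
        have hm2 : ((i : ℕ), j + 1) ∈ shapeP n α m lam p := shape_mem_q hanti (by omega) h2
        unfold moveT
        simp only [if_neg hi]
        exact hssyt.2.1 i j hm1 hm2
    · intro i j h1 h2
      by_cases hi : i + 1 < stairLen n α
      · have hq1 := q_le_of_mem hanti h1 (by omega)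
        have hc1 := cellMove_mem (p := p) hanti h1
        have hc2 := cellMove_mem (p := p) hanti h2
        rw [moveT_value (q_le_of_mem hanti h1), moveT_value (q_le_of_mem hanti h2)]
        unfold cellMove at hc1 hc2 ⊢
        simp only [if_pos hi, if_pos (show i < stairLen n α by omega)] at hc1 hc2 ⊢
        exact hssyt.2.2 i (j - q + p) hc1 hc2
      · by_cases hi2 : i < stairLen n α
        · -- junction row
          have e1 : i = stairLen n α - 1 := by omega
          have e2 : i + 1 = stairLen n α := by omega
          rw [e2] at h2 ⊢
          rw [e1] at h1 ⊢
          exact hj j h1 h2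
        · have hm1 : ((i : ℕ), j) ∈ shapeP n α m lam p := shape_mem_q hanti (by omega) h1
          have hm2 : ((i + 1 : ℕ), j) ∈ shapeP n α m lam p := shape_mem_q hanti (by omega) h2
          unfold moveT
          simp only [if_neg hi2, if_neg hi]
          exact hssyt.2.2 i j hm1 hm2
  · -- vanishing off the diagram
    intro x hx
    unfold moveT
    by_cases h1 : x.1 < stairLen n α
    · rw [if_pos h1]
      by_cases h2 : q ≤ x.2
      · rw [if_pos h2]
        apply hzero
        intro hcon
        exact hx (mem_delta_offset hanti h1 h2 hcon)
      · rw [if_neg h2]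
    · rw [if_neg h1]
      apply hzero
      intro hcon
      exact hx (shape_mem_q hanti (by omega) hcon)
  · -- content
    funext v
    have := filter_transfer (n := n) (α := α) (m := m) (T := T) hanti (p := p) (q := q) (v := v)
      (fun _ => True) (fun _ => True) (fun y _ => Iff.rfl)
    unfold content
    simp only [true_and] at this
    rw [this, ← hcont]
    rfl
  · -- lattice
    intro x hx v
    rw [filter_transfer hanti (fun y => ReadBefore x y)
          (fun y => ReadBefore (cellMove (stairLen n α) p q x) y)
          (fun y hy => (cellMove_rb hanti hx hy).symm),
        filter_transfer hanti (fun y => ReadBefore x y)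
          (fun y => ReadBefore (cellMove (stairLen n α) p q x) y)
          (fun y hy => (cellMove_rb hanti hx hy).symm)]
    exact hlat _ (cellMove_mem hanti hx) v

end Transfer

section Assembly

variable {n : ℕ} {α : ℕ → ℕ} {m : ℕ} {lam : ℕ → ℕ} {T : ℕ × ℕ → ℕ}

lemma moveT_moveT {L p q : ℕ} {T : ℕ × ℕ → ℕ}
    (h0 : ∀ x : ℕ × ℕ, x.1 < L → x.2 < p → T x = 0) :
    moveT L q p (moveT L p q T) = T := by
  funext x
  unfold moveT
  by_cases h1 : x.1 < L
  · rw [if_pos h1]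
    by_cases h2 : p ≤ x.2
    · rw [if_pos h2]
      simp only [if_pos h1, if_pos (show q ≤ x.2 - p + q by omega)]
      rw [show ((x.1 : ℕ), x.2 - p + q - q + p) = x from Prod.ext rfl (by simp only; omega)]
    · rw [if_neg h2]
      exact (h0 x h1 (by omega)).symm
  · rw [if_neg h1, if_neg h1]

lemma vanish_low (hanti : Antitone lam) {p : ℕ} {cc : ℕ → ℕ}
    (hT : T ∈ LatticeSSYTs (shapeP n α m lam p) cc) :
    ∀ x : ℕ × ℕ, x.1 < stairLen n α → x.2 < p → T x = 0 := by
  intro x h1 h2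
  have hx : x ∉ shapeP n α m lam p := by
    rw [mem_shapeP hanti]
    rintro (h | h) <;> omega
  exact hT.1.2.1 x hx

lemma key_count (n k : ℕ) (α : ℕ → ℕ) (hα : IsComposition n α)
    (m : ℕ) (lam : ℕ → ℕ) (hanti : Antitone lam)
    (hm : ∀ i, m ≤ i → lam i = 0) (hval : lam 0 ≤ n + k)
    (ν : ℕ → ℕ) (hν : ν 0 ≤ n + k) :
    lrCount (dsumS n α m lam) (partContent ν) =
      lrCount (shapeS n α m lam k) (partContent ν) := by
  rcases Nat.eq_zero_or_pos n with hn | hn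
  · subst hn
    have hde : deltaUp 0 α = ∅ := by
      unfold deltaUp
      have : Finset.range 0 = ∅ := rfl
      rw [this]
      simp
    have hshapes : dsumS 0 α m lam = shapeS 0 α m lam k := by
      unfold dsumS shapeS
      rw [hde]
      simp [shiftD]
    rw [hshapes]
  · have hL := L_pos hα hn
    rw [dsumS_eq_shapeP, shapeS_eq_shapeP]
    unfold lrCount
    have hcont1 : ∀ T : ℕ × ℕ → ℕ, T ∈ LatticeSSYTs (shapeP n α m lam (lam 0)) (partContent ν) →
        content (shapeP n α m lam (lam 0)) T 1 ≤ n + k := by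
      intro T hT
      have := congrFun hT.1.2.2 1
      rw [this]
      unfold partContent
      simpa using hν
    have himg : LatticeSSYTs (shapeP n α m lam k) (partContent ν) =
        (moveT (stairLen n α) (lam 0) k) ''
          (LatticeSSYTs (shapeP n α m lam (lam 0)) (partContent ν)) := by
      apply Set.Subset.antisymm
      · intro T hT
        refine ⟨moveT (stairLen n α) k (lam 0) T, ?_, ?_⟩
        · apply transfer hanti hT
          intro j hj1 hj2
          exfalso
          rw [mem_shapeP hanti] at hj1 hj2
          rcases hj2 with h' | h'
          · omega
          · have hjlam : j < lam 0 := by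
              have := h'.2.2
              rwa [Nat.sub_self] at this
            rcases hj1 with h | h
            · omega
            · omega
        · exact moveT_moveT (vanish_low hanti hT)
      · rintro T' ⟨T, hT, rfl⟩
        apply transfer hanti hT
        intro j hj1 hj2
        rw [mem_shapeP hanti] at hj1 hj2
        have hj1' : k ≤ j ∧ j - k < n ∧ stairLen n α ≤ stairLen n α - 1 + ht n α (j - k) := by
          rcases hj1 with h | h
          · exact ⟨h.2.1, h.2.2.1, h.2.2.2⟩
          · omega
        obtain ⟨hk1, hk2, hk3⟩ := hj1'
        have hj2' : j < lam 0 := by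
          rcases hj2 with h | h
          · omega
          · have := h.2.2
            rwa [Nat.sub_self] at this
        obtain ⟨⟨hssyt, hzero, hcont⟩, hlat⟩ := hT
        have hcan := canonical hα hanti hssyt hlat (stairLen n α - 1) (j - k)
          (by omega) hk2 hk3
        have hbound := rowL_bound (k := k) (p := lam 0) hα hanti hm hssyt hlat
          (hcont1 T ⟨⟨hssyt, hzero, hcont⟩, hlat⟩) j hk1 hj2'
        unfold moveT
        simp only [if_pos (show stairLen n α - 1 < stairLen n α by omega),
          if_pos hk1, if_neg (show ¬ stairLen n α < stairLen n α by omega)]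
        rw [show j - k + lam 0 = (j - k) + lam 0 by rfl] at *
        rw [hcan]
        omega
    rw [himg]
    apply (Set.ncard_image_of_injOn ?_).symm
    intro T1 h1 T2 h2 heq
    have e1 := moveT_moveT (q := k) (vanish_low hanti h1)
    have e2 := moveT_moveT (q := k) (vanish_low hanti h2)
    rw [← e1, ← e2, heq]

end Assembly

/-- For `0 ≤ k ≤ 1` and complementation in any rectangle of width
`w = n + k`, `c(s_λ · s_{Δ_α}) = c(s_{S(λ,α;k)})`. -/
theorem trunc_dsum_eq_shapeS (n k : ℕ) (α : ℕ → ℕ) (hα : IsComposition n α)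
    (hk : k ≤ 1) (m : ℕ) (lam : ℕ → ℕ) (hanti : Antitone lam)
    (hm : ∀ i, m ≤ i → lam i = 0) (hval : lam 0 ≤ n + k)
    (l : ℕ) (c : ℕ → ℕ) :
    truncComplement l (n + k) (fun ν => lrCount (dsumS n α m lam) (partContent ν)) c =
      truncComplement l (n + k)
        (fun ν => lrCount (shapeS n α m lam k) (partContent ν)) c := by
  unfold truncComplement
  apply Finset.sum_congr rfl
  intro ν _
  by_cases h : Antitone (extFun l (n + k) ν)
  · rw [if_pos h, if_pos h]
    congr 1
    apply key_count n k α hα m lam hanti hm hval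
    unfold extFun
    split
    · exact Fin.is_le _
    · exact Nat.zero_le _
  · rw [if_neg h, if_neg h]

end SchurStair
end
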